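/- Let T : X → X be bi-measurable and nonsingular on a measure space (X, B, μ), let Ω ∈ B, and set S = ∪_{k≥0} T^{-k}(T^k(T(Ω))). Then S = T^{-m}(T^m(S)) for every m ≥ 0; in particular S lies in the tail σ-algebra ∩_{m≥0} T^{-m}(B), and if μ(Ω) > 0 then μ(S) > 0. -/

import Mathlib

open MeasureTheory Set Function

/-- For a bi-measurable nonsingular map `T` and a measurable set `Ω`, the set
`S = ⋃_{k ≥ 0} T^{-k}(T^k(T(Ω)))` satisfies `S = T^{-m}(T^m(S))` for every
`m ≥ 0` (so `S` lies in the tail σ-algebra), and `μ(Ω) > 0` implies `μ(S) > 0`. -/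
theorem tail_set_of_union
    {X : Type*} [MeasurableSpace X] (μ : Measure X) (T : X → X)
    (hT : Measurable T)
    (hbi : ∀ s : Set X, MeasurableSet s → MeasurableSet (T '' s))
    (hns : ∀ s : Set X, MeasurableSet s → (μ (T ⁻¹' s) = 0 ↔ μ s = 0))
    (Ω : Set X) (hΩ : MeasurableSet Ω) :
    (∀ m : ℕ, (⋃ k : ℕ, T^[k] ⁻¹' (T^[k] '' (T '' Ω)))
        = T^[m] ⁻¹' (T^[m] '' (⋃ k : ℕ, T^[k] ⁻¹' (T^[k] '' (T '' Ω))))) ∧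
      (0 < μ Ω → 0 < μ (⋃ k : ℕ, T^[k] ⁻¹' (T^[k] '' (T '' Ω)))) := by
  constructor
  · intro m
    apply Subset.antisymm (subset_preimage_image _ _)
    intro x hx
    obtain ⟨y, hy, hxy⟩ := hx
    obtain ⟨k, hk⟩ := mem_iUnion.1 hy
    refine mem_iUnion.2 ⟨k + m, ?_⟩
    have h1 : T^[k + m] x = T^[m] (T^[k] y) := by
      rw [Function.iterate_add_apply, ← hxy, ← Function.iterate_add_apply, Nat.add_comm,
        Function.iterate_add_apply]
    show T^[k + m] x ∈ T^[k + m] '' (T '' Ω)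
    have h2 : T^[k + m] '' (T '' Ω) = T^[m] '' (T^[k] '' (T '' Ω)) := by
      rw [Nat.add_comm, Function.iterate_add, Set.image_comp]
    rw [h1, h2]
    exact mem_image_of_mem _ hk
  · intro hΩpos
    have h1 : 0 < μ (T '' Ω) := by
      rcases eq_or_lt_of_le (zero_le : 0 ≤ μ (T '' Ω)) with h | h
      · exfalso
        have h2 := (hns _ (hbi _ hΩ)).2 h.symm
        have h3 : μ Ω = 0 := measure_mono_null (subset_preimage_image T Ω) h2
        exact absurd h3 hΩpos.ne'
      · exact h
    refine h1.trans_le (measure_mono ?_)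
    have h0 : T '' Ω = T^[0] ⁻¹' (T^[0] '' (T '' Ω)) := by simp
    exact h0.trans_subset (subset_iUnion (fun k : ℕ => T^[k] ⁻¹' (T^[k] '' (T '' Ω))) 0)
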